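/- arXiv:1409.2913 — 3 statements merged into one kernel-verified Lean document; each statement's English description precedes it below -/
import Mathlib

section
/- For every η > 0, the standard n-dimensional Gaussian measure of the centered Euclidean ball of radius √n − η is at most e^{−η²/2}. -/
open MeasureTheory Real

/-- The standard Gaussian measure on `ℝⁿ`, with density `(2π)^{-n/2} e^{-‖x‖²/2}`
with respect to Lebesgue measure. -/
noncomputable def gauss (n : ℕ) : Measure (EuclideanSpace ℝ (Fin n)) :=
  volume.withDensity (fun x => ENNReal.ofReal ((2 * π) ^ (-(n : ℝ) / 2) * Real.exp (-‖x‖ ^ 2 / 2)))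

private lemma integrable_aux (n : ℕ) {b : ℝ} (hb : 0 < b) :
    Integrable (fun v : EuclideanSpace ℝ (Fin n) => rexp (-b * ‖v‖ ^ 2)) := by
  have h := (GaussianFourier.integrable_cexp_neg_mul_sq_norm_add (V := EuclideanSpace ℝ (Fin n))
    (b := (b : ℂ)) (by simpa using hb) 0 0).re
  refine h.congr (Filter.Eventually.of_forall fun v => ?_)
  have : ((-b : ℂ) * (‖v‖ : ℂ) ^ 2 + 0 * ((inner ℝ (0 : EuclideanSpace ℝ (Fin n)) v : ℝ) : ℂ))
      = ((-b * ‖v‖ ^ 2 : ℝ) : ℂ) := by push_cast; ring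
  simp only [this, ← Complex.ofReal_exp, Complex.ofReal_re, RCLike.re_to_complex]


theorem stmt0 (n : ℕ) (η : ℝ) (hη : 0 < η) :
    gauss n (Metric.closedBall 0 (Real.sqrt n - η)) ≤ ENNReal.ofReal (Real.exp (-η ^ 2 / 2)) := by
  rcases lt_trichotomy (Real.sqrt n - η) 0 with h0 | h0 | h0
  · rw [Metric.closedBall_eq_empty.2 h0]
    simp
  · -- radius zero: the ball is a single point, of measure zero
    have hs : 0 < Real.sqrt n := by linarith
    have hn : 0 < n := Nat.cast_pos.mp (by exact_mod_cast Real.sqrt_pos.mp hs)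
    haveI : Nonempty (Fin n) := ⟨⟨0, hn⟩⟩
    rw [h0, Metric.closedBall_zero, gauss,
      withDensity_apply _ (measurableSet_singleton 0),
      setLIntegral_measure_zero _ _ (measure_singleton _)]
    exact zero_le
  · -- main case
    set r : ℝ := Real.sqrt n - η with hrdef
    set s : ℝ := Real.sqrt n with hsdef
    have hs2 : s ^ 2 = n := Real.sq_sqrt (Nat.cast_nonneg n)
    have hs : 0 < s := by linarith
    have hrs : r < s := by simp [hrdef, hsdef]; linarith
    have hr2n : r ^ 2 ≤ (n : ℝ) := by nlinarith
    have hn : (0 : ℝ) < n := by nlinarith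
    set b : ℝ := (n : ℝ) / (2 * r ^ 2) with hbdef
    have hb : 0 < b := by positivity
    have hb12 : 1 / 2 ≤ b := by
      rw [hbdef, le_div_iff₀ (by positivity)]; nlinarith
    set K : ℝ := (2 * π) ^ (-(n : ℝ) / 2) * Real.exp (((n : ℝ) - r ^ 2) / 2) with hKdef
    have hC : (0 : ℝ) < (2 * π) ^ (-(n : ℝ) / 2) := Real.rpow_pos_of_pos (by positivity) _
    have step2 : gauss n (Metric.closedBall 0 r)
        ≤ ∫⁻ x : EuclideanSpace ℝ (Fin n), ENNReal.ofReal (K * rexp (-b * ‖x‖ ^ 2)) := by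
      rw [gauss, withDensity_apply _ Metric.isClosed_closedBall.measurableSet]
      refine le_trans (setLIntegral_mono (by fun_prop) fun x hx => ?_)
        (setLIntegral_le_lintegral _ _)
      refine ENNReal.ofReal_le_ofReal ?_
      rw [hKdef, mul_assoc, ← Real.exp_add]
      refine mul_le_mul_of_nonneg_left (Real.exp_le_exp.mpr ?_) hC.le
      have hx' : ‖x‖ ^ 2 ≤ r ^ 2 := by
        have := mem_closedBall_zero_iff.mp hx
        nlinarith [norm_nonneg x]
      have hbn : b * (2 * r ^ 2) = (n : ℝ) := by
        rw [hbdef]; field_simp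
      nlinarith [mul_nonneg (by linarith : (0:ℝ) ≤ b - 1/2) (by linarith : (0:ℝ) ≤ r ^ 2 - ‖x‖ ^ 2)]
    have step4 : (∫⁻ x : EuclideanSpace ℝ (Fin n), ENNReal.ofReal (K * rexp (-b * ‖x‖ ^ 2)))
        = ENNReal.ofReal (K * (π / b) ^ ((n : ℝ) / 2)) := by
      rw [← ofReal_integral_eq_lintegral_ofReal (((integrable_aux n hb).const_mul K))
        (Filter.Eventually.of_forall fun x => by positivity),
        integral_const_mul, GaussianFourier.integral_rexp_neg_mul_sq_norm hb,
        finrank_euclideanSpace_fin]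
    refine (step2.trans_eq step4).trans (ENNReal.ofReal_le_ofReal ?_)
    -- final real inequality
    have hpb : π / b = 2 * π * (r ^ 2 / (n : ℝ)) := by
      rw [hbdef]; field_simp
    have key : K * (π / b) ^ ((n : ℝ) / 2)
        = rexp (((n : ℝ) - r ^ 2) / 2 + (n : ℝ) / 2 * Real.log (r ^ 2 / n)) := by
      rw [hpb, Real.mul_rpow (by positivity) (by positivity), hKdef]
      rw [Real.rpow_def_of_pos (by positivity : (0:ℝ) < r ^ 2 / n)]
      have hAB : (2 * π) ^ (-(n : ℝ) / 2) * (2 * π) ^ ((n : ℝ) / 2) = 1 := by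
        rw [← Real.rpow_add (by positivity), neg_div, neg_add_cancel, Real.rpow_zero]
      rw [mul_mul_mul_comm, hAB, one_mul, ← Real.exp_add]
      congr 1
      ring
    rw [key, Real.exp_le_exp]
    have hlog : Real.log (r ^ 2 / n) = 2 * Real.log (r / s) := by
      rw [show r ^ 2 / (n : ℝ) = (r / s) ^ 2 from by rw [← hs2]; ring, Real.log_pow]
      push_cast; ring
    have hle : Real.log (r / s) ≤ r / s - 1 := Real.log_le_sub_one_of_pos (by positivity)
    have hdiv : (n : ℝ) * (r / s) = s * r := by rw [← hs2]; field_simp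
    have : (n : ℝ) * Real.log (r / s) ≤ s * r - n := by
      calc (n : ℝ) * Real.log (r / s) ≤ (n : ℝ) * (r / s - 1) :=
            mul_le_mul_of_nonneg_left hle hn.le
        _ = s * r - n := by rw [mul_sub, hdiv]; ring
    rw [hlog]
    have hrs' : r = s - η := hrdef
    nlinarith [this, hs2]
end

section
/- If X is a random variable distributed as the standard Gaussian measure on ℝⁿ restricted and normalized to a measurable set K, then ‖E[X]‖ ≤ 4√(log(2/γ_n(K))). -/
open MeasureTheory Real
open scoped RealInnerProductSpace Pointwise
open scoped ENNReal NNReal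

/-- The Gaussian mean-width `w(K) = E[sup_{x ∈ K} ⟨Γ, x⟩]` of a set `K ⊆ ℝⁿ`. -/
noncomputable def meanWidth (n : ℕ) (K : Set (EuclideanSpace ℝ (Fin n))) : ℝ :=
  ∫ g, sSup ((fun x => ⟪g, x⟫) '' K) ∂(gauss n)

lemma gauss_aux_integrable (n : ℕ) (b c : ℝ) (hb : 0 < b) (w : EuclideanSpace ℝ (Fin n)) :
    Integrable (fun v : EuclideanSpace ℝ (Fin n) => rexp (-b * ‖v‖ ^ 2 + c * ⟪w, v⟫)) := by
  have h := (GaussianFourier.integrable_cexp_neg_mul_sq_norm_add (V := EuclideanSpace ℝ (Fin n))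
      (b := (b : ℂ)) (by simpa using hb) (c : ℂ) w).re
  refine h.congr (Filter.Eventually.of_forall fun v => ?_)
  have : (-(b:ℂ) * ‖v‖ ^ 2 + (c : ℂ) * ⟪w, v⟫) =
      ((-b * ‖v‖ ^ 2 + c * ⟪w, v⟫ : ℝ) : ℂ) := by push_cast; ring
  simp only [this, ← Complex.ofReal_exp, Complex.ofReal_re, RCLike.re_to_complex]

lemma gauss_rho_continuous (n : ℕ) :
    Continuous (fun x : EuclideanSpace ℝ (Fin n) =>
      (2 * π) ^ (-(n : ℝ) / 2) * rexp (-‖x‖ ^ 2 / 2)) := by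
  fun_prop

lemma gauss_integral_eq {E' : Type*} [NormedAddCommGroup E'] [NormedSpace ℝ E']
    (n : ℕ) (g : EuclideanSpace ℝ (Fin n) → E') :
    ∫ x, g x ∂(gauss n) =
      ∫ x, ((2 * π) ^ (-(n : ℝ) / 2) * rexp (-‖x‖ ^ 2 / 2)) • g x := by
  rw [gauss]
  rw [show (fun x : EuclideanSpace ℝ (Fin n) =>
      ENNReal.ofReal ((2 * π) ^ (-(n : ℝ) / 2) * rexp (-‖x‖ ^ 2 / 2))) =
      (fun x => (Real.toNNReal ((2 * π) ^ (-(n : ℝ) / 2) * rexp (-‖x‖ ^ 2 / 2)) : ℝ≥0∞)) from rfl]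
  rw [integral_withDensity_eq_integral_smul
    ((gauss_rho_continuous n).measurable.real_toNNReal) g]
  congr 1
  ext x
  rw [NNReal.smul_def, Real.coe_toNNReal _ (by positivity)]

lemma gauss_integrable_iff {E' : Type*} [NormedAddCommGroup E'] [NormedSpace ℝ E']
    (n : ℕ) (g : EuclideanSpace ℝ (Fin n) → E') :
    Integrable g (gauss n) ↔
      Integrable (fun x => ((2 * π) ^ (-(n : ℝ) / 2) * rexp (-‖x‖ ^ 2 / 2)) • g x) volume := by
  rw [gauss]
  rw [show (fun x : EuclideanSpace ℝ (Fin n) =>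
      ENNReal.ofReal ((2 * π) ^ (-(n : ℝ) / 2) * rexp (-‖x‖ ^ 2 / 2))) =
      (fun x => (Real.toNNReal ((2 * π) ^ (-(n : ℝ) / 2) * rexp (-‖x‖ ^ 2 / 2)) : ℝ≥0∞)) from rfl]
  rw [integrable_withDensity_iff_integrable_smul
    ((gauss_rho_continuous n).measurable.real_toNNReal)]
  refine integrable_congr (Filter.Eventually.of_forall fun x => ?_)
  show _ • _ = _ • _
  rw [NNReal.smul_def, Real.coe_toNNReal _ (by positivity)]

lemma gauss_aux_integral (n : ℕ) (c : ℝ) (w : EuclideanSpace ℝ (Fin n)) :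
    ∫ v : EuclideanSpace ℝ (Fin n), rexp (-(1/2) * ‖v‖ ^ 2 + c * ⟪w, v⟫) =
      (2 * π) ^ ((n : ℝ) / 2) * rexp (c ^ 2 * ‖w‖ ^ 2 / 2) := by
  have h := GaussianFourier.integral_cexp_neg_mul_sq_norm_add (V := EuclideanSpace ℝ (Fin n))
      (b := (1/2 : ℂ)) (by norm_num) (c : ℂ) w
  have heq : ∀ v : EuclideanSpace ℝ (Fin n),
      Complex.exp (-(1/2 : ℂ) * ‖v‖ ^ 2 + (c : ℂ) * ⟪w, v⟫) =
      ((rexp (-(1/2) * ‖v‖ ^ 2 + c * ⟪w, v⟫) : ℝ) : ℂ) := by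
    intro v
    rw [Complex.ofReal_exp]
    congr 1
    push_cast; ring
  simp_rw [heq] at h
  have hli : (∫ v : EuclideanSpace ℝ (Fin n),
      ((rexp (-(1/2) * ‖v‖ ^ 2 + c * ⟪w, v⟫) : ℝ) : ℂ)) =
      ((∫ v : EuclideanSpace ℝ (Fin n), rexp (-(1/2) * ‖v‖ ^ 2 + c * ⟪w, v⟫) : ℝ) : ℂ) := by
    change _ = Complex.ofRealLI _
    rw [← Complex.ofRealLI.integral_comp_comm]
    rfl
  rw [hli] at h
  rw [← Complex.ofReal_inj, h, finrank_euclideanSpace_fin]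
  rw [Complex.ofReal_mul]
  congr 1
  · rw [Complex.ofReal_cpow (by positivity)]
    push_cast
    congr 1
    ring
  · rw [Complex.ofReal_exp]
    congr 1
    push_cast; ring

lemma gauss_exp_integrable (n : ℕ) (c : ℝ) (w : EuclideanSpace ℝ (Fin n)) :
    Integrable (fun x => rexp (c * ⟪w, x⟫)) (gauss n) := by
  rw [gauss_integrable_iff]
  have hpt : ∀ x : EuclideanSpace ℝ (Fin n),
      ((2 * π) ^ (-(n : ℝ) / 2) * rexp (-‖x‖ ^ 2 / 2)) • rexp (c * ⟪w, x⟫) =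
      (2 * π) ^ (-(n : ℝ) / 2) * rexp (-(1/2) * ‖x‖ ^ 2 + c * ⟪w, x⟫) := fun x => by
    rw [smul_eq_mul, mul_assoc, ← Real.exp_add]
    congr 2
    ring
  simp_rw [hpt]
  exact (gauss_aux_integrable n (1/2) c (by norm_num) w).const_mul _

lemma gauss_exp_integral (n : ℕ) (c : ℝ) (w : EuclideanSpace ℝ (Fin n)) :
    ∫ x, rexp (c * ⟪w, x⟫) ∂(gauss n) = rexp (c ^ 2 * ‖w‖ ^ 2 / 2) := by
  rw [gauss_integral_eq]
  have hpt : ∀ x : EuclideanSpace ℝ (Fin n),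
      ((2 * π) ^ (-(n : ℝ) / 2) * rexp (-‖x‖ ^ 2 / 2)) • rexp (c * ⟪w, x⟫) =
      (2 * π) ^ (-(n : ℝ) / 2) * rexp (-(1/2) * ‖x‖ ^ 2 + c * ⟪w, x⟫) := fun x => by
    rw [smul_eq_mul, mul_assoc, ← Real.exp_add]
    congr 2
    ring
  simp_rw [hpt]
  rw [integral_const_mul, gauss_aux_integral, ← mul_assoc, ← Real.rpow_add (by positivity),
    show (-(n:ℝ)/2 + (n:ℝ)/2) = 0 by ring, Real.rpow_zero, one_mul]

lemma gauss_univ (n : ℕ) : gauss n Set.univ = 1 := by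
  have h0 : ∀ x : EuclideanSpace ℝ (Fin n),
      (2 * π) ^ (-(n : ℝ) / 2) * rexp (-‖x‖ ^ 2 / 2) =
      (2 * π) ^ (-(n : ℝ) / 2) * rexp (-(1/2) * ‖x‖ ^ 2 + (0:ℝ) * ⟪(0 : EuclideanSpace ℝ (Fin n)), x⟫) := fun x => by
    congr 2
    simp
    ring
  have hint : Integrable (fun x : EuclideanSpace ℝ (Fin n) =>
      (2 * π) ^ (-(n : ℝ) / 2) * rexp (-‖x‖ ^ 2 / 2)) volume := by
    simp_rw [h0]
    exact (gauss_aux_integrable n (1/2) 0 (by norm_num) 0).const_mul _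
  rw [gauss, withDensity_apply _ MeasurableSet.univ, Measure.restrict_univ,
    ← ofReal_integral_eq_lintegral_ofReal hint
      (Filter.Eventually.of_forall fun x => by positivity)]
  simp_rw [h0]
  rw [integral_const_mul, gauss_aux_integral, ← mul_assoc, ← Real.rpow_add (by positivity),
    show (-(n:ℝ)/2 + (n:ℝ)/2) = 0 by ring, Real.rpow_zero, one_mul]
  simp

instance gauss_prob (n : ℕ) : IsProbabilityMeasure (gauss n) := ⟨gauss_univ n⟩

lemma gauss_id_integrable (n : ℕ) :
    Integrable (fun x : EuclideanSpace ℝ (Fin n) => x) (gauss n) := by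
  rw [gauss_integrable_iff]
  set cn : ℝ := (2 * π) ^ (-(n : ℝ) / 2) with hcn
  have hcn0 : 0 < cn := by positivity
  refine Integrable.mono ((gauss_aux_integrable n (1/4) 0 (by norm_num) 0).const_mul (2 * cn))
    ?_ (Filter.Eventually.of_forall fun x => ?_)
  · exact (((gauss_rho_continuous n).smul continuous_id)).aestronglyMeasurable
  · have hr : ∀ r : ℝ, 0 ≤ r → r * rexp (-r ^ 2 / 2) ≤ 2 * rexp (-(1/4) * r ^ 2) := by
      intro r hr
      have h1 : r ≤ 2 * rexp (r ^ 2 / 4) := by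
        nlinarith [Real.add_one_le_exp (r ^ 2 / 4), sq_nonneg (r - 1)]
      have h2 : 0 < rexp (-r ^ 2 / 2) := Real.exp_pos _
      have h3 : rexp (r ^ 2 / 4) * rexp (-r ^ 2 / 2) = rexp (-(1/4) * r ^ 2) := by
        rw [← Real.exp_add]; congr 1; ring
      nlinarith [mul_le_mul_of_nonneg_right h1 h2.le]
    have hx : 0 ≤ ‖x‖ := norm_nonneg _
    rw [norm_smul, Real.norm_eq_abs, abs_of_nonneg (by positivity), Real.norm_eq_abs,
      abs_of_nonneg (by positivity)]
    calc cn * rexp (-‖x‖ ^ 2 / 2) * ‖x‖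
        = cn * (‖x‖ * rexp (-‖x‖ ^ 2 / 2)) := by ring
      _ ≤ cn * (2 * rexp (-(1/4) * ‖x‖ ^ 2)) :=
          mul_le_mul_of_nonneg_left (hr _ hx) hcn0.le
      _ = 2 * cn * rexp (-(1/4) * ‖x‖ ^ 2 + 0 * ⟪(0 : EuclideanSpace ℝ (Fin n)), x⟫) := by
          rw [show -(1/4 : ℝ) * ‖x‖ ^ 2 + 0 * ⟪(0 : EuclideanSpace ℝ (Fin n)), x⟫
            = -(1/4) * ‖x‖ ^ 2 by simp]
          ring

set_option maxHeartbeats 1000000 in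
theorem stmt11 (n : ℕ) (K : Set (EuclideanSpace ℝ (Fin n))) (hm : MeasurableSet K)
    (hpos : 0 < gauss n K) :
    ‖(gauss n K).toReal⁻¹ • ∫ x in K, x ∂(gauss n)‖ ≤
      4 * Real.sqrt (Real.log (2 / (gauss n K).toReal)) := by
  set μ := gauss n with hμ
  set m : ℝ := (μ K).toReal with hmdef
  have hKne : μ K ≠ ⊤ := (lt_of_le_of_lt prob_le_one (by norm_num)).ne
  have hm0 : 0 < m := ENNReal.toReal_pos hpos.ne' hKne
  have hm1 : m ≤ 1 := by
    have := ENNReal.toReal_mono (by norm_num) (prob_le_one (μ := μ) (s := K))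
    simpa using this
  set L : ℝ := Real.log (2 / m) with hLdef
  have hL2 : Real.log 2 ≤ L := by
    apply Real.log_le_log (by norm_num)
    rw [le_div_iff₀ hm0]
    nlinarith
  have hLpos : 0 < L := lt_of_lt_of_le (Real.log_pos (by norm_num)) hL2
  set s : ℝ := Real.sqrt L with hsdef
  have hs0 : 0 < s := Real.sqrt_pos.2 hLpos
  have hs2 : s ^ 2 = L := Real.sq_sqrt hLpos.le
  set t : ℝ := Real.sqrt (2 * L) with htdef
  have ht0 : 0 < t := Real.sqrt_pos.2 (by positivity)
  have ht2 : t ^ 2 = 2 * L := Real.sq_sqrt (by positivity)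
  clear_value m L s t
  set I : EuclideanSpace ℝ (Fin n) := ∫ x in K, x ∂μ with hIdef
  set b : EuclideanSpace ℝ (Fin n) := m⁻¹ • I with hbdef
  show ‖b‖ ≤ 4 * s
  rcases le_or_gt ‖b‖ 0 with hb | hb
  · exact le_trans hb (by nlinarith [hs0])
  have hbne : b ≠ 0 := fun h => by simp [h] at hb
  set θ : EuclideanSpace ℝ (Fin n) := ‖b‖⁻¹ • b with hθdef
  have hθ1 : ‖θ‖ = 1 := norm_smul_inv_norm hbne
  clear_value I b θ
  -- integrability facts
  have hIdK : Integrable (fun x : EuclideanSpace ℝ (Fin n) => x) (μ.restrict K) :=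
    (gauss_id_integrable n).restrict
  have hinnerK : Integrable (fun x : EuclideanSpace ℝ (Fin n) => ⟪θ, x⟫) (μ.restrict K) :=
    (innerSL ℝ θ).integrable_comp hIdK
  have hexpInt : Integrable (fun x : EuclideanSpace ℝ (Fin n) => rexp (t * ⟪θ, x⟫)) μ :=
    gauss_exp_integrable n t θ
  have hexpInt2 : Integrable
      (fun x : EuclideanSpace ℝ (Fin n) => rexp (t * ⟪θ, x⟫ - t ^ 2)) μ := by
    refine (hexpInt.const_mul (rexp (-t ^ 2))).congr (Filter.Eventually.of_forall fun x => ?_)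
    simp only [← Real.exp_add]
    congr 1
    ring
  have hgInt : Integrable
      (fun x : EuclideanSpace ℝ (Fin n) => t + t⁻¹ * rexp (t * ⟪θ, x⟫ - t ^ 2)) μ :=
    (integrable_const t).add (hexpInt2.const_mul _)
  -- key identity
  have hIne : ‖I‖ ≠ 0 := by
    intro h
    rw [hbdef, norm_smul, h, mul_zero] at hb
    exact lt_irrefl _ hb
  have hkey : ‖b‖ = m⁻¹ * ∫ x in K, ⟪θ, x⟫ ∂μ := by
    rw [integral_inner hIdK θ, ← hIdef]
    have h1 : ⟪θ, I⟫ = ‖b‖⁻¹ * ⟪b, I⟫ := by rw [hθdef, real_inner_smul_left]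
    have hbI : ⟪b, I⟫ = m⁻¹ * ⟪I, I⟫ := by rw [hbdef, real_inner_smul_left]
    have hII : ⟪I, I⟫ = ‖I‖ * ‖I‖ := real_inner_self_eq_norm_mul_norm I
    have hbnorm : ‖b‖ = m⁻¹ * ‖I‖ := by
      rw [hbdef, norm_smul, Real.norm_eq_abs, abs_of_nonneg (inv_nonneg.2 hm0.le)]
    rw [h1, hbI, hII, hbnorm]
    field_simp
  -- pointwise bound
  have hpt : ∀ x : EuclideanSpace ℝ (Fin n),
      ⟪θ, x⟫ ≤ t + t⁻¹ * rexp (t * ⟪θ, x⟫ - t ^ 2) := by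
    intro x
    set u : ℝ := ⟪θ, x⟫
    have h1 : t * u - t ^ 2 ≤ rexp (t * u - t ^ 2) := by
      have := Real.add_one_le_exp (t * u - t ^ 2)
      linarith
    have h2 : u - t ≤ rexp (t * u - t ^ 2) / t := by
      rw [le_div_iff₀ ht0]
      nlinarith
    have h3 : rexp (t * u - t ^ 2) / t = t⁻¹ * rexp (t * u - t ^ 2) := by ring
    linarith [h2, h3.le]
  -- main integral bound
  have hbound : ∫ x in K, ⟪θ, x⟫ ∂μ ≤ t * m + t⁻¹ * rexp (-t ^ 2 / 2) := by
    have step1 : ∫ x in K, ⟪θ, x⟫ ∂μ ≤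
        ∫ x in K, (t + t⁻¹ * rexp (t * ⟪θ, x⟫ - t ^ 2)) ∂μ :=
      integral_mono hinnerK hgInt.restrict hpt
    have step2 : ∫ x in K, (t + t⁻¹ * rexp (t * ⟪θ, x⟫ - t ^ 2)) ∂μ =
        t * m + t⁻¹ * ∫ x in K, rexp (t * ⟪θ, x⟫ - t ^ 2) ∂μ := by
      rw [integral_add (integrable_const t) (hexpInt2.const_mul _).restrict,
        setIntegral_const, integral_const_mul]
      rw [smul_eq_mul, mul_comm, measureReal_def, ← hmdef]
    have step3 : ∫ x in K, rexp (t * ⟪θ, x⟫ - t ^ 2) ∂μ ≤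
        ∫ x, rexp (t * ⟪θ, x⟫ - t ^ 2) ∂μ :=
      setIntegral_le_integral hexpInt2
        (Filter.Eventually.of_forall fun x => (Real.exp_pos _).le)
    have step4 : ∫ x, rexp (t * ⟪θ, x⟫ - t ^ 2) ∂μ = rexp (-t ^ 2 / 2) := by
      have hptw : ∀ x : EuclideanSpace ℝ (Fin n),
          rexp (t * ⟪θ, x⟫ - t ^ 2) = rexp (-t ^ 2) * rexp (t * ⟪θ, x⟫) := fun x => by
        rw [← Real.exp_add]
        congr 1
        ring
      simp_rw [hptw]
      rw [integral_const_mul, hμ, gauss_exp_integral n t θ, hθ1, ← Real.exp_add]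
      congr 1
      norm_num
      ring
    have h5 : t⁻¹ * ∫ x in K, rexp (t * ⟪θ, x⟫ - t ^ 2) ∂μ ≤ t⁻¹ * rexp (-t ^ 2 / 2) :=
      mul_le_mul_of_nonneg_left (step3.trans_eq step4) (inv_nonneg.2 ht0.le)
    linarith
  -- e^{-t²/2} = m/2
  have hexpval : rexp (-t ^ 2 / 2) = m / 2 := by
    rw [ht2, show -(2 * L) / 2 = -L by ring, Real.exp_neg, hLdef,
      Real.exp_log (div_pos two_pos hm0)]
    field_simp
  -- combine
  have hfinal : ‖b‖ ≤ t + t⁻¹ / 2 := by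
    rw [hkey]
    calc m⁻¹ * ∫ x in K, ⟪θ, x⟫ ∂μ
        ≤ m⁻¹ * (t * m + t⁻¹ * rexp (-t ^ 2 / 2)) :=
          mul_le_mul_of_nonneg_left hbound (inv_nonneg.2 hm0.le)
      _ = t + t⁻¹ / 2 := by rw [hexpval]; field_simp
  -- numeric conclusion
  have hts : t = Real.sqrt 2 * s := by
    rw [htdef, hsdef, Real.sqrt_mul (by norm_num)]
  have hsqrt2a : (1.414 : ℝ) ≤ Real.sqrt 2 := by
    nlinarith [Real.sq_sqrt (show (0:ℝ) ≤ 2 by norm_num), Real.sqrt_nonneg (2:ℝ)]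
  have hsqrt2b : Real.sqrt 2 ≤ (1.415 : ℝ) := by
    nlinarith [Real.sq_sqrt (show (0:ℝ) ≤ 2 by norm_num), Real.sqrt_nonneg (2:ℝ)]
  have hlog2 : (0.6931 : ℝ) ≤ L := le_trans (by linarith [Real.log_two_gt_d9]) hL2
  have hss : (0.6931 : ℝ) ≤ s * s := by
    have h' : s * s = L := by rw [← hs2]; ring
    linarith
  have htinv : t⁻¹ / 2 ≤ (4 - Real.sqrt 2) * s := by
    have hmul : Real.sqrt 2 * Real.sqrt 2 = 2 := Real.mul_self_sqrt (by norm_num)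
    have h2 : t⁻¹ ≤ (4 - Real.sqrt 2) * s * 2 := by
      rw [← one_div, div_le_iff₀ ht0, hts]
      nlinarith [hsqrt2a, hsqrt2b, hss, hs0.le, hmul]
    linarith
  calc ‖b‖ ≤ t + t⁻¹ / 2 := hfinal
    _ = Real.sqrt 2 * s + t⁻¹ / 2 := by rw [hts]
    _ ≤ Real.sqrt 2 * s + (4 - Real.sqrt 2) * s := by linarith
    _ = 4 * s := by ring
end

section
/- If K ⊂ ℝⁿ is a symmetric convex body with γ_n(K) ≥ δ, and c > 0 is chosen so that (1/√(2π)) ∫_{−c}^{c} e^{−x²/2} dx = δ, then the centered Euclidean ball of radius c is contained in K. -/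
open MeasureTheory Real
open scoped RealInnerProductSpace Pointwise
open scoped ENNReal

lemma euclid_norm_sq {n : ℕ} (x : EuclideanSpace ℝ (Fin n)) : ‖x‖ ^ 2 = ∑ i, x i ^ 2 := by
  rw [EuclideanSpace.norm_eq, Real.sq_sqrt (by positivity)]
  simp [sq_abs]

lemma meas_sum_density (m : ℕ) (C : ℝ) :
    Measurable fun y : Fin m → ℝ =>
      ENNReal.ofReal (C * Real.exp (-(∑ i, y i ^ 2) / 2)) := by
  apply Measurable.ennreal_ofReal
  apply Measurable.const_mul
  apply Real.measurable_exp.comp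
  apply Measurable.div_const
  apply Measurable.neg
  exact Finset.measurable_sum _ fun i _ => (measurable_pi_apply i).pow_const 2

lemma meas1 (C : ℝ) :
    Measurable fun s : ℝ => ENNReal.ofReal (C * Real.exp (-s ^ 2 / 2)) := by
  apply Measurable.ennreal_ofReal
  apply Measurable.const_mul
  exact Real.measurable_exp.comp ((measurable_id.pow_const 2).neg.div_const 2)

lemma factor (m : ℕ) (f : ℝ → ℝ≥0∞) (hf : Measurable f) :
    (∫⁻ x : EuclideanSpace ℝ (Fin (m+1)),
      f (x 0) * ENNReal.ofReal ((2 * π) ^ (-((m:ℝ)+1) / 2) * Real.exp (-‖x‖ ^ 2 / 2)))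
    = (∫⁻ s : ℝ, f s * ENNReal.ofReal ((2 * π) ^ (-(1:ℝ) / 2) * Real.exp (-s ^ 2 / 2)))
      * ∫⁻ y : EuclideanSpace ℝ (Fin m),
          ENNReal.ofReal ((2 * π) ^ (-(m:ℝ) / 2) * Real.exp (-‖y‖ ^ 2 / 2)) := by
  have key : ∀ a S : ℝ,
      (2*π) ^ (-((m:ℝ)+1)/2) * Real.exp (-(a^2+S)/2)
        = ((2*π) ^ (-(1:ℝ)/2) * Real.exp (-a^2/2)) * ((2*π) ^ (-(m:ℝ)/2) * Real.exp (-S/2)) := by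
    intro a S
    rw [show (-((m:ℝ)+1)/2) = (-(1:ℝ)/2) + (-(m:ℝ)/2) by ring,
      Real.rpow_add (by positivity), show (-(a^2+S)/2) = (-a^2/2) + (-S/2) by ring,
      Real.exp_add]
    ring
  set BIG : (Fin (m+1) → ℝ) → ℝ≥0∞ := fun z =>
    f (z 0) * ENNReal.ofReal ((2 * π) ^ (-((m:ℝ)+1) / 2) * Real.exp (-(∑ i, z i ^ 2) / 2))
    with hBIGdef
  have hBIG : Measurable BIG :=
    (hf.comp (measurable_pi_apply 0)).mul (meas_sum_density (m+1) _)
  -- step 1: rewrite norm as sum of squares and move to the pi space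
  have h1 : (∫⁻ x : EuclideanSpace ℝ (Fin (m+1)),
      f (x 0) * ENNReal.ofReal ((2 * π) ^ (-((m:ℝ)+1) / 2) * Real.exp (-‖x‖ ^ 2 / 2)))
      = ∫⁻ z : Fin (m+1) → ℝ, BIG z ∂volume := by
    rw [← (EuclideanSpace.volume_preserving_symm_measurableEquiv_toLp (Fin (m+1))).lintegral_comp hBIG]
    refine lintegral_congr fun x => ?_
    rw [hBIGdef]
    simp only
    rw [euclid_norm_sq]
    rfl
  rw [h1]
  -- step 2: split off coordinate 0
  have h2a : (∫⁻ z : Fin (m+1) → ℝ, BIG z ∂volume)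
      = ∫⁻ w : ℝ × (Fin m → ℝ),
          BIG ((MeasurableEquiv.piFinSuccAbove (fun _ : Fin (m+1) => ℝ) 0).symm w) ∂volume :=
    ((MeasurePreserving.symm _
      (measurePreserving_piFinSuccAbove (fun _ : Fin (m+1) => (volume : Measure ℝ)) 0)
      ).lintegral_comp hBIG).symm
  have h2b : (∫⁻ w : ℝ × (Fin m → ℝ),
          BIG ((MeasurableEquiv.piFinSuccAbove (fun _ : Fin (m+1) => ℝ) 0).symm w) ∂volume)
      = ∫⁻ w : ℝ × (Fin m → ℝ),
          (f w.1 * ENNReal.ofReal ((2*π) ^ (-(1:ℝ)/2) * Real.exp (-w.1^2/2)))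
          * ENNReal.ofReal ((2*π) ^ (-(m:ℝ)/2) * Real.exp (-(∑ i, w.2 i ^2)/2)) ∂volume := by
    refine lintegral_congr fun w => ?_
    have hz : (MeasurableEquiv.piFinSuccAbove (fun _ : Fin (m+1) => ℝ) 0).symm w
        = Fin.insertNth 0 w.1 w.2 := rfl
    have h0 : (MeasurableEquiv.piFinSuccAbove (fun _ : Fin (m+1) => ℝ) 0).symm w 0 = w.1 := by
      rw [hz]; simp
    have hsum : ∑ i, ((MeasurableEquiv.piFinSuccAbove (fun _ : Fin (m+1) => ℝ) 0).symm w i)^2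
        = w.1 ^ 2 + ∑ i, w.2 i ^ 2 := by
      rw [hz, Fin.sum_univ_succ, Fin.insertNth_apply_same]
      congr 1
    rw [hBIGdef]
    simp only
    rw [h0, hsum, key w.1 (∑ i, w.2 i ^ 2), ENNReal.ofReal_mul (by positivity), mul_assoc]
  rw [h2a, h2b]
  -- step 3: Fubini for products
  have h3 : (∫⁻ w : ℝ × (Fin m → ℝ),
          (f w.1 * ENNReal.ofReal ((2*π) ^ (-(1:ℝ)/2) * Real.exp (-w.1^2/2)))
          * ENNReal.ofReal ((2*π) ^ (-(m:ℝ)/2) * Real.exp (-(∑ i, w.2 i ^2)/2)) ∂volume)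
      = (∫⁻ s : ℝ, f s * ENNReal.ofReal ((2*π) ^ (-(1:ℝ)/2) * Real.exp (-s^2/2)))
        * ∫⁻ y : Fin m → ℝ,
            ENNReal.ofReal ((2*π) ^ (-(m:ℝ)/2) * Real.exp (-(∑ i, y i ^2)/2)) ∂volume :=
    lintegral_prod_mul (μ := (volume : Measure ℝ)) (ν := (volume : Measure (Fin m → ℝ)))
      ((hf.mul (meas1 _)).aemeasurable) ((meas_sum_density m _).aemeasurable)
  rw [h3]
  congr 1
  -- step 4: back to Euclidean space
  rw [← (EuclideanSpace.volume_preserving_symm_measurableEquiv_toLp (Fin m)).lintegral_comp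
    (meas_sum_density m _)]
  refine lintegral_congr fun y => ?_
  rw [euclid_norm_sq]
  rfl

lemma one_dim_mass :
    (∫⁻ s : ℝ, ENNReal.ofReal ((2 * π) ^ (-(1:ℝ) / 2) * Real.exp (-s ^ 2 / 2))) = 1 := by
  have hint : Integrable (fun s : ℝ => (2 * π) ^ (-(1:ℝ) / 2) * Real.exp (-s ^ 2 / 2)) := by
    have : (fun s : ℝ => Real.exp (-s ^ 2 / 2)) = fun s : ℝ => Real.exp (-(1/2) * s ^ 2) := by
      funext s; ring_nf
    exact ((this ▸ integrable_exp_neg_mul_sq (by norm_num : (0:ℝ) < 1/2)).const_mul _)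
  rw [← ofReal_integral_eq_lintegral_ofReal hint
    (Filter.Eventually.of_forall fun s => by positivity)]
  rw [integral_const_mul]
  have : (∫ s : ℝ, Real.exp (-s ^ 2 / 2)) = Real.sqrt (2 * π) := by
    have h : (fun s : ℝ => Real.exp (-s ^ 2 / 2)) = fun s : ℝ => Real.exp (-(1/2) * s ^ 2) := by
      funext s; ring_nf
    rw [h, integral_gaussian]
    rw [show π / (1/2:ℝ) = 2 * π by ring]
  rw [this, Real.sqrt_eq_rpow, ← Real.rpow_add (by positivity)]
  norm_num

lemma mass (n : ℕ) :
    (∫⁻ y : EuclideanSpace ℝ (Fin n),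
      ENNReal.ofReal ((2 * π) ^ (-(n:ℝ) / 2) * Real.exp (-‖y‖ ^ 2 / 2))) = 1 := by
  induction n with
  | zero =>
    have huniv : (volume : Measure (EuclideanSpace ℝ (Fin 0))) Set.univ = 1 := by
      have h := (EuclideanSpace.volume_preserving_symm_measurableEquiv_toLp (Fin 0)).measure_preimage
        (MeasurableSet.univ).nullMeasurableSet
      simpa [MeasureTheory.volume_pi, Measure.pi_univ] using h
    have hnorm : ∀ y : EuclideanSpace ℝ (Fin 0), ‖y‖ = 0 := by
      intro y
      rw [EuclideanSpace.norm_eq]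
      simp
    calc (∫⁻ y : EuclideanSpace ℝ (Fin 0),
        ENNReal.ofReal ((2 * π) ^ (-((0:ℕ):ℝ) / 2) * Real.exp (-‖y‖ ^ 2 / 2)))
        = ∫⁻ _ : EuclideanSpace ℝ (Fin 0), 1 := by
          refine lintegral_congr fun y => ?_
          rw [hnorm y]
          norm_num
      _ = 1 := by rw [lintegral_one, huniv]
  | succ m ih =>
    have hexp : (-((m+1:ℕ):ℝ) / 2) = (-((m:ℝ)+1) / 2) := by push_cast; ring
    have h := factor m (fun _ => 1) measurable_const
    simp only [one_mul] at h
    rw [hexp, h, one_dim_mass, one_mul, ih]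

lemma gauss_coord (m : ℕ) (t : ℝ) :
    gauss (m+1) {x : EuclideanSpace ℝ (Fin (m+1)) | |x 0| ≤ t}
      = ∫⁻ s in Set.Icc (-t) t,
          ENNReal.ofReal ((2 * π) ^ (-(1:ℝ) / 2) * Real.exp (-s ^ 2 / 2)) := by
  have hmeas0 : Measurable fun x : EuclideanSpace ℝ (Fin (m+1)) => x 0 :=
    (measurable_pi_apply 0).comp (MeasurableEquiv.toLp 2 (Fin (m+1) → ℝ)).symm.measurable
  have hS : MeasurableSet {x : EuclideanSpace ℝ (Fin (m+1)) | |x 0| ≤ t} :=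
    measurableSet_le hmeas0.abs measurable_const
  have hexp : (-((m+1:ℕ):ℝ) / 2) = (-((m:ℝ)+1) / 2) := by push_cast; ring
  rw [gauss, withDensity_apply _ hS]
  have hind : (∫⁻ x in {x : EuclideanSpace ℝ (Fin (m+1)) | |x 0| ≤ t},
      ENNReal.ofReal ((2 * π) ^ (-((m+1:ℕ):ℝ) / 2) * Real.exp (-‖x‖ ^ 2 / 2)) ∂volume)
      = ∫⁻ x : EuclideanSpace ℝ (Fin (m+1)),
          (Set.Icc (-t) t).indicator (fun _ => (1:ℝ≥0∞)) (x 0)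
            * ENNReal.ofReal ((2 * π) ^ (-((m:ℝ)+1) / 2) * Real.exp (-‖x‖ ^ 2 / 2)) := by
    rw [← lintegral_indicator hS]
    refine lintegral_congr fun x => ?_
    rw [← hexp]
    by_cases hx : |x 0| ≤ t
    · rw [Set.indicator_of_mem (show x ∈ {x : EuclideanSpace ℝ (Fin (m+1)) | |x 0| ≤ t} from hx),
        Set.indicator_of_mem (by simpa [Set.mem_Icc, abs_le] using hx), one_mul]
    · rw [Set.indicator_of_notMem
        (show x ∉ {x : EuclideanSpace ℝ (Fin (m+1)) | |x 0| ≤ t} from hx),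
        Set.indicator_of_notMem (by simpa [Set.mem_Icc, abs_le] using hx), zero_mul]
  rw [hind, factor m _ (measurable_const.indicator measurableSet_Icc), mass m, mul_one,
    ← lintegral_indicator measurableSet_Icc]
  refine lintegral_congr fun s => ?_
  by_cases hs : s ∈ Set.Icc (-t) t
  · rw [Set.indicator_of_mem hs, Set.indicator_of_mem hs, one_mul]
  · rw [Set.indicator_of_notMem hs, Set.indicator_of_notMem hs, zero_mul]

lemma gauss_slab (n : ℕ) (θ : EuclideanSpace ℝ (Fin n)) (hθ : ‖θ‖ = 1) (t : ℝ) :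
    gauss n {x | |⟪x, θ⟫| ≤ t}
      = ∫⁻ s in Set.Icc (-t) t,
          ENNReal.ofReal ((2 * π) ^ (-(1:ℝ) / 2) * Real.exp (-s ^ 2 / 2)) := by
  cases n with
  | zero =>
    exfalso
    have : θ = 0 := by ext i; exact i.elim0
    rw [this, norm_zero] at hθ
    norm_num at hθ
  | succ m =>
    have hcard : Module.finrank ℝ (EuclideanSpace ℝ (Fin (m+1))) = Fintype.card (Fin (m+1)) := by
      simp
    have hortho : Orthonormal ℝ (({0} : Set (Fin (m+1))).restrict (fun _ => θ)) :=
      ⟨fun _ => hθ, fun i j hij => absurd (Subsingleton.elim i j) hij⟩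
    obtain ⟨b, hb⟩ := hortho.exists_orthonormalBasis_extension_of_card_eq hcard
    have hb0 : b 0 = θ := hb 0 rfl
    have hset : {x : EuclideanSpace ℝ (Fin (m+1)) | |⟪x, θ⟫| ≤ t}
        = ⇑b.repr ⁻¹' {y : EuclideanSpace ℝ (Fin (m+1)) | |y 0| ≤ t} := by
      ext x
      simp only [Set.mem_setOf_eq, Set.mem_preimage]
      rw [b.repr_apply_apply, hb0, real_inner_comm]
    have hmeas0 : Measurable fun x : EuclideanSpace ℝ (Fin (m+1)) => x 0 :=
      (measurable_pi_apply 0).comp (MeasurableEquiv.toLp 2 (Fin (m+1) → ℝ)).symm.measurable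
    have hS : MeasurableSet {y : EuclideanSpace ℝ (Fin (m+1)) | |y 0| ≤ t} :=
      measurableSet_le hmeas0.abs measurable_const
    have hrmeas : Measurable (⇑b.repr) := b.repr.toHomeomorph.measurable
    have hemb : MeasurableEmbedding (⇑b.repr) := b.repr.toHomeomorph.measurableEmbedding
    rw [hset, gauss, withDensity_apply _ (hS.preimage hrmeas)]
    have hchg : (∫⁻ x in ⇑b.repr ⁻¹' {y : EuclideanSpace ℝ (Fin (m+1)) | |y 0| ≤ t},
        ENNReal.ofReal ((2 * π) ^ (-((m+1:ℕ):ℝ) / 2) * Real.exp (-‖x‖ ^ 2 / 2)) ∂volume)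
        = ∫⁻ y in {y : EuclideanSpace ℝ (Fin (m+1)) | |y 0| ≤ t},
            ENNReal.ofReal ((2 * π) ^ (-((m+1:ℕ):ℝ) / 2) * Real.exp (-‖y‖ ^ 2 / 2)) ∂volume := by
      refine Eq.trans (lintegral_congr fun x => ?_)
        (b.measurePreserving_repr.setLIntegral_comp_preimage_emb hemb
          (fun y => ENNReal.ofReal ((2 * π) ^ (-((m+1:ℕ):ℝ) / 2) * Real.exp (-‖y‖ ^ 2 / 2))) _)
      rw [b.repr.norm_map]
    rw [hchg, ← withDensity_apply _ hS, ← gauss, gauss_coord]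

lemma exp_sq_cont : Continuous fun s : ℝ => Real.exp (-s ^ 2 / 2) :=
  Real.continuous_exp.comp (((continuous_pow 2).neg).div_const 2)

lemma Cval : (2 * π) ^ (-(1:ℝ)/2) = 1 / Real.sqrt (2 * π) := by
  rw [show (-(1:ℝ)/2) = -(1/2:ℝ) by ring, Real.rpow_neg (by positivity), Real.sqrt_eq_rpow]
  exact (one_div _).symm

lemma slab_value (t : ℝ) :
    (∫⁻ s in Set.Icc (-t) t, ENNReal.ofReal ((2 * π) ^ (-(1:ℝ)/2) * Real.exp (-s ^ 2 / 2)))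
    = ENNReal.ofReal ((1 / Real.sqrt (2 * π)) * ∫ s in Set.Icc (-t) t, Real.exp (-s ^ 2 / 2)) := by
  have hint : IntegrableOn (fun s : ℝ => (2 * π) ^ (-(1:ℝ)/2) * Real.exp (-s ^ 2 / 2))
      (Set.Icc (-t) t) := (continuous_const.mul exp_sq_cont).integrableOn_Icc
  rw [← ofReal_integral_eq_lintegral_ofReal hint
    (Filter.Eventually.of_forall fun s => by positivity), integral_const_mul, Cval]

lemma icc_int_pos {c : ℝ} (hc : 0 < c) :
    0 < ∫ s in Set.Icc (-c) c, Real.exp (-s ^ 2 / 2) := by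
  rw [MeasureTheory.integral_Icc_eq_integral_Ioc,
    ← intervalIntegral.integral_of_le (by linarith : -c ≤ c)]
  exact intervalIntegral.intervalIntegral_pos_of_pos
    (exp_sq_cont.intervalIntegrable _ _) (fun s => Real.exp_pos _) (by linarith)

lemma icc_int_lt {t c : ℝ} (ht : 0 ≤ t) (htc : t < c) :
    (∫ s in Set.Icc (-t) t, Real.exp (-s ^ 2 / 2))
      < ∫ s in Set.Icc (-c) c, Real.exp (-s ^ 2 / 2) := by
  have hII : ∀ a b : ℝ, IntervalIntegrable (fun s => Real.exp (-s ^ 2 / 2)) volume a b :=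
    fun a b => exp_sq_cont.intervalIntegrable a b
  rw [MeasureTheory.integral_Icc_eq_integral_Ioc, MeasureTheory.integral_Icc_eq_integral_Ioc,
    ← intervalIntegral.integral_of_le (by linarith : -t ≤ t),
    ← intervalIntegral.integral_of_le (by linarith : -c ≤ c)]
  have h1 : (∫ s in (-c)..(-t), Real.exp (-s ^ 2 / 2)) + ∫ s in (-t)..c, Real.exp (-s ^ 2 / 2)
      = ∫ s in (-c)..c, Real.exp (-s ^ 2 / 2) :=
    intervalIntegral.integral_add_adjacent_intervals (hII _ _) (hII _ _)
  have h2 : (∫ s in (-t)..t, Real.exp (-s ^ 2 / 2)) + ∫ s in t..c, Real.exp (-s ^ 2 / 2)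
      = ∫ s in (-t)..c, Real.exp (-s ^ 2 / 2) :=
    intervalIntegral.integral_add_adjacent_intervals (hII _ _) (hII _ _)
  have hp1 : 0 < ∫ s in (-c)..(-t), Real.exp (-s ^ 2 / 2) :=
    intervalIntegral.intervalIntegral_pos_of_pos (hII _ _) (fun s => Real.exp_pos _)
      (by linarith)
  have hp2 : 0 < ∫ s in t..c, Real.exp (-s ^ 2 / 2) :=
    intervalIntegral.intervalIntegral_pos_of_pos (hII _ _) (fun s => Real.exp_pos _)
      (by linarith)
  linarith

theorem stmt18 (n : ℕ) (δ c : ℝ) (hc : 0 < c)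
    (K : Set (EuclideanSpace ℝ (Fin n)))
    (hK : Convex ℝ K) (hsym : K = -K) (hKcl : IsClosed K)
    (hγ : ENNReal.ofReal δ ≤ gauss n K)
    (hcδ : (1 / Real.sqrt (2 * π)) * ∫ x in Set.Icc (-c) c, Real.exp (-x ^ 2 / 2) = δ) :
    Metric.closedBall 0 c ⊆ K := by
  have hδpos : 0 < δ := by
    rw [← hcδ]
    exact mul_pos (by positivity) (icc_int_pos hc)
  have hKne : K.Nonempty := by
    rcases Set.eq_empty_or_nonempty K with h | h
    · exfalso
      rw [h] at hγ
      simp only [measure_empty, nonpos_iff_eq_zero] at hγ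
      exact absurd hγ (ENNReal.ofReal_pos.2 hδpos).ne'
    · exact h
  obtain ⟨x₀, hx₀⟩ := hKne
  have hx₀' : -x₀ ∈ K := by
    rw [hsym]
    simpa using hx₀
  have h0K : (0 : EuclideanSpace ℝ (Fin n)) ∈ K := by
    have := hK hx₀ hx₀' (by norm_num : (0:ℝ) ≤ 1/2) (by norm_num : (0:ℝ) ≤ 1/2)
      (by norm_num : (1/2:ℝ) + 1/2 = 1)
    simpa using this
  intro p hp
  by_contra hpK
  have hpnorm : ‖p‖ ≤ c := by
    simpa [Metric.mem_closedBall, dist_zero_right] using hp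
  obtain ⟨f, u, hfK, hup⟩ := geometric_hahn_banach_closed_point hK hKcl hpK
  have hu0 : 0 < u := by simpa using hfK 0 h0K
  set v := (InnerProductSpace.toDual ℝ (EuclideanSpace ℝ (Fin n))).symm f with hv
  have hfv : ∀ x, ⟪v, x⟫ = f x := fun x => InnerProductSpace.toDual_symm_apply
  have hvne : v ≠ 0 := by
    intro h
    have h2 : f p = 0 := by rw [← hfv, h, inner_zero_left]
    rw [h2] at hup
    linarith
  have hvpos : 0 < ‖v‖ := norm_pos_iff.2 hvne
  set θ : EuclideanSpace ℝ (Fin n) := ‖v‖⁻¹ • v with hθdef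
  have hθ : ‖θ‖ = 1 := by
    rw [hθdef, norm_smul, norm_inv, norm_norm, inv_mul_cancel₀ hvpos.ne']
  have hinner : ∀ x, ⟪x, θ⟫ = ‖v‖⁻¹ * f x := by
    intro x
    rw [hθdef, real_inner_smul_right, real_inner_comm, hfv]
  set t := ‖v‖⁻¹ * u with ht
  have htpos : 0 < t := mul_pos (inv_pos.2 hvpos) hu0
  have hKslab : K ⊆ {x | |⟪x, θ⟫| ≤ t} := by
    intro a ha
    have h1 : f a < u := hfK a ha
    have ha' : -a ∈ K := by rw [hsym]; simpa using ha
    have h2 : f (-a) < u := hfK _ ha'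
    rw [map_neg] at h2
    simp only [Set.mem_setOf_eq, hinner, abs_mul, abs_of_pos (inv_pos.2 hvpos), ht]
    exact mul_le_mul_of_nonneg_left (abs_le.2 ⟨by linarith, h1.le⟩) (inv_pos.2 hvpos).le
  have htc : t < c := by
    have h1 : t < ⟪p, θ⟫ := by
      rw [hinner, ht]
      exact (mul_lt_mul_iff_right₀ (inv_pos.2 hvpos)).2 hup
    have h2 : ⟪p, θ⟫ ≤ c := by
      calc ⟪p, θ⟫ ≤ ‖p‖ * ‖θ‖ := real_inner_le_norm p θ
        _ ≤ c := by rw [hθ, mul_one]; exact hpnorm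
    linarith
  have hmono : gauss n K ≤ gauss n {x | |⟪x, θ⟫| ≤ t} := measure_mono hKslab
  have hval : gauss n {x | |⟪x, θ⟫| ≤ t}
      = ENNReal.ofReal ((1 / Real.sqrt (2*π)) * ∫ s in Set.Icc (-t) t, Real.exp (-s^2/2)) := by
    rw [gauss_slab n θ hθ t, slab_value]
  have hlt : (1 / Real.sqrt (2*π)) * (∫ s in Set.Icc (-t) t, Real.exp (-s^2/2)) < δ := by
    rw [← hcδ]
    exact mul_lt_mul_of_pos_left (icc_int_lt htpos.le htc) (by positivity)
  have hfin : gauss n {x | |⟪x, θ⟫| ≤ t} < ENNReal.ofReal δ := by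
    rw [hval]
    exact (ENNReal.ofReal_lt_ofReal_iff hδpos).2 hlt
  exact absurd (hγ.trans hmono) hfin.not_ge
end
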